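/- Let $(V,\sigma_V)$ and $(W,\sigma_W)$ be presymplectic vector spaces. If the canonical Poisson algebras $\mathrm{CanPois}(V,\sigma_V) = (S(V), \{\cdot,\cdot\}_{\sigma_V})$ and $\mathrm{CanPois}(W,\sigma_W) = (S(W), \{\cdot,\cdot\}_{\sigma_W})$ are isomorphic as unital Poisson algebras, then $(V,\sigma_V)$ and $(W,\sigma_W)$ are isomorphic as presymplectic vector spaces. Moreover, given a Poisson algebra isomorphism $\kappa$, the map $L = \pi_{S^1(W)} \circ \kappa|_{S^1(V)}$ (the composition of the restriction of $\kappa$ to degree-one elements with the projection onto degree one) is a presymplectic isomorphism. -/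

import Mathlib

open MvPolynomial

/-- The canonical Poisson bracket on the symmetric algebra `S(V)` (presented as the
polynomial algebra on a basis of `V`) induced by a presymplectic form `σ`. -/
def IsCanPoisBracket {V ι : Type*} [AddCommGroup V] [Module ℝ V]
    (σ : V →ₗ[ℝ] V →ₗ[ℝ] ℝ) (b : Module.Basis ι ℝ V)
    (P : MvPolynomial ι ℝ →ₗ[ℝ] MvPolynomial ι ℝ →ₗ[ℝ] MvPolynomial ι ℝ) : Prop :=
  (∀ i j, P (X i) (X j) = C (σ (b i) (b j))) ∧
  (∀ a c, P a c = - P c a) ∧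
  (∀ a c d, P a (P c d) + P c (P d a) + P d (P a c) = 0) ∧
  (∀ a c d, P a (c * d) = P a c * d + c * P a d)

namespace Stmt2Aux

variable {ι κ' : Type*}

/-- The differential at a point `p`, sending `f` to the finitely supported family
`i ↦ (∂ᵢ f)(p)`. -/
noncomputable def Dm (p : ι → ℝ) : MvPolynomial ι ℝ →ₗ[ℝ] (ι →₀ ℝ) :=
  (MvPolynomial.basisMonomials ι ℝ).constr ℝ fun d =>
    d.support.sum fun i => Finsupp.single i (aeval p (pderiv i (monomial d (1 : ℝ))))

lemma Dm_monomial_one (p : ι → ℝ) (d : ι →₀ ℕ) :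
    Dm p (monomial d (1 : ℝ)) =
      d.support.sum fun i => Finsupp.single i (aeval p (pderiv i (monomial d (1 : ℝ)))) := by
  have h := (MvPolynomial.basisMonomials ι ℝ).constr_basis ℝ
    (fun d => d.support.sum fun i => Finsupp.single i (aeval p (pderiv i (monomial d (1:ℝ))))) d
  simp only [coe_basisMonomials] at h
  exact h

lemma Dm_apply (p : ι → ℝ) (f : MvPolynomial ι ℝ) (i : ι) :
    Dm p f i = aeval p (pderiv i f) := by
  induction f using MvPolynomial.induction_on' with
  | add f g hf hg => simp [map_add, hf, hg]
  | monomial d r =>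
    classical
    have hr : monomial d r = r • monomial d (1 : ℝ) := by
      rw [smul_monomial, smul_eq_mul, mul_one]
    have hR : aeval p (pderiv i (monomial d r)) = r * aeval p (pderiv i (monomial d (1:ℝ))) := by
      rw [pderiv_monomial, pderiv_monomial, aeval_monomial, aeval_monomial]
      simp only [Algebra.algebraMap_self_apply]
      ring
    rw [hR, hr, map_smul, Finsupp.smul_apply, smul_eq_mul]
    congr 1
    rw [Dm_monomial_one, Finset.sum_apply']
    simp_rw [Finsupp.single_apply]
    rw [Finset.sum_ite_eq' d.support i fun i' => aeval p (pderiv i' (monomial d (1:ℝ)))]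
    by_cases hi : i ∈ d.support
    · rw [if_pos hi]
    · rw [if_neg hi]
      have hd : d i = 0 := Finsupp.notMem_support_iff.mp hi
      simp [pderiv_monomial, hd]

lemma Dm_C (p : ι → ℝ) (a : ℝ) : Dm p (C a : MvPolynomial ι ℝ) = 0 :=
  Finsupp.ext fun i => by simp [Dm_apply]

lemma Dm_X (p : ι → ℝ) (j : ι) : Dm p (X j : MvPolynomial ι ℝ) = Finsupp.single j 1 :=
  Finsupp.ext fun i => by
    classical
    rw [Dm_apply, Finsupp.single_apply]
    by_cases h : j = i
    · subst h; simp [pderiv_X_self]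
    · simp [pderiv_X_of_ne h, h]

lemma Dm_mul (p : ι → ℝ) (f g : MvPolynomial ι ℝ) :
    Dm p (f * g) = aeval p f • Dm p g + aeval p g • Dm p f :=
  Finsupp.ext fun i => by
    simp only [Dm_apply, pderiv_mul, map_add, map_mul, Finsupp.add_apply, Finsupp.smul_apply,
      smul_eq_mul]
    ring

lemma Dm_constr {V : Type*} [AddCommGroup V] [Module ℝ V] (b : Module.Basis ι ℝ V)
    (p : ι → ℝ) (v : V) :
    Dm p ((b.constr ℝ fun i => (X i : MvPolynomial ι ℝ)) v) = b.repr v := by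
  have h : (Dm p).comp (b.constr ℝ fun i => (X i : MvPolynomial ι ℝ))
      = (b.repr : V →ₗ[ℝ] (ι →₀ ℝ)) := by
    apply b.ext
    intro i
    simp [Module.Basis.constr_basis, Dm_X, Module.Basis.repr_self]
  exact DFunLike.congr_fun h v

/-- The chain rule for differentials at a point. -/
lemma Dm_chain (ψ : MvPolynomial κ' ℝ →ₐ[ℝ] MvPolynomial ι ℝ) (p : ι → ℝ) (q : κ' → ℝ)
    (hq : ∀ j, aeval p (ψ (X j)) = q j) (f : MvPolynomial κ' ℝ) :
    Dm p (ψ f) = Finsupp.linearCombination ℝ (fun j => Dm p (ψ (X j))) (Dm q f) := by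
  have hev : ∀ g : MvPolynomial κ' ℝ, aeval p (ψ g) = aeval q g := by
    intro g
    have h : (aeval p).comp ψ = aeval (R := ℝ) q := by
      apply MvPolynomial.algHom_ext
      intro j
      rw [AlgHom.comp_apply, aeval_X]; exact hq j
    exact DFunLike.congr_fun h g
  induction f using MvPolynomial.induction_on with
  | C a =>
    have : ψ (C a) = C a := by
      rw [← MvPolynomial.algebraMap_eq, AlgHom.commutes, MvPolynomial.algebraMap_eq]
    rw [this, Dm_C, Dm_C, map_zero]
  | add f g hf hg => rw [map_add, map_add, map_add, map_add, hf, hg]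
  | mul_X f j hf =>
    rw [map_mul, Dm_mul, Dm_mul, Dm_X, hf, hev, map_add, map_smul, map_smul,
      Finsupp.linearCombination_single, one_smul, aeval_X, hq]

lemma degree_one_exists (d : κ' →₀ ℕ) (h : d.degree = 1) :
    ∃ j, d = Finsupp.single j 1 := by
  classical
  have hd0 : d ≠ 0 := by
    intro h0
    rw [h0, map_zero] at h
    exact one_ne_zero h.symm
  obtain ⟨j, hj⟩ := Finsupp.support_nonempty_iff.mpr hd0
  refine ⟨j, ?_⟩
  have hj1 : 1 ≤ d j := Nat.one_le_iff_ne_zero.mpr (Finsupp.mem_support_iff.mp hj)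
  have hle : d j ≤ d.degree := Finsupp.le_degree j d
  have hdj : d j = 1 := le_antisymm (h ▸ hle) hj1
  rw [Finsupp.eq_single_iff]
  refine ⟨?_, hdj⟩
  intro k hk
  simp only [Finset.mem_singleton]
  by_contra hkj
  have hsum : d j + d k ≤ d.degree := by
    have : ({j, k} : Finset κ').sum d ≤ d.support.sum d := by
      apply Finset.sum_le_sum_of_subset
      intro x hx
      simp only [Finset.mem_insert, Finset.mem_singleton] at hx
      rcases hx with rfl | rfl
      · exact hj
      · exact hk
    rwa [Finset.sum_insert (by simpa using (Ne.symm hkj)), Finset.sum_singleton] at this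
  have hk1 : 1 ≤ d k := Nat.one_le_iff_ne_zero.mpr (Finsupp.mem_support_iff.mp hk)
  omega

lemma homogeneousComponent_monomial' (n : ℕ) (d : κ' →₀ ℕ) (r : ℝ) :
    homogeneousComponent n (monomial d r) =
      if d.degree = n then monomial d r else 0 := by
  classical
  ext e
  rw [coeff_homogeneousComponent, coeff_monomial, apply_ite (coeff e), coeff_monomial, coeff_zero]
  by_cases hd : d = e
  · subst hd; simp
  · simp [hd]

lemma degree_single_one (j : κ') : (Finsupp.single j 1 : κ' →₀ ℕ).degree = 1 := by
  classical
  rw [Finsupp.degree_apply, Finsupp.support_single_ne_zero j one_ne_zero, Finset.sum_singleton,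
    Finsupp.single_eq_same]

lemma aeval_zero_eq_zero_of_ne (d : κ' →₀ ℕ) (hd : d ≠ 0) (r : ℝ) :
    aeval (0 : κ' → ℝ) (monomial d r) = 0 := by
  classical
  obtain ⟨k, hk⟩ := Finsupp.support_nonempty_iff.mpr hd
  rw [aeval_monomial]
  have : (d.prod fun i k => (0 : κ' → ℝ) i ^ k) = 0 := by
    rw [Finsupp.prod]
    exact Finset.prod_eq_zero hk
      (by simp [zero_pow (Finsupp.mem_support_iff.mp hk)])
  rw [this, mul_zero]

/-- linear combination of the differential at zero recovers the degree-one component. -/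
lemma lc_Dm_eq_hc1 (f : MvPolynomial κ' ℝ) :
    Finsupp.linearCombination ℝ (fun j => (X j : MvPolynomial κ' ℝ)) (Dm (0 : κ' → ℝ) f)
      = homogeneousComponent 1 f := by
  classical
  induction f using MvPolynomial.induction_on' with
  | add f g hf hg => rw [map_add, map_add, map_add, hf, hg]
  | monomial d r =>
    by_cases h1 : ∃ j, d = Finsupp.single j 1
    · obtain ⟨j, rfl⟩ := h1
      have hm : monomial (Finsupp.single j 1) r = r • (X j : MvPolynomial κ' ℝ) := by
        rw [X, smul_monomial, smul_eq_mul, mul_one]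
      rw [homogeneousComponent_monomial', if_pos (degree_single_one j), hm, map_smul, Dm_X,
        map_smul, Finsupp.linearCombination_single, one_smul]
    · have hD : Dm (0 : κ' → ℝ) (monomial d r) = 0 := by
        apply Finsupp.ext
        intro i
        rw [Dm_apply, pderiv_monomial, Finsupp.coe_zero, Pi.zero_apply]
        by_cases hdi : d i = 0
        · simp [hdi]
        · have hne : d - Finsupp.single i 1 ≠ 0 := by
            intro h0
            have hle : d ≤ Finsupp.single i 1 := tsub_eq_zero_iff_le.mp h0
            apply h1
            refine ⟨i, ?_⟩
            have h1i : d i = 1 := le_antisymm (by simpa using hle i) (Nat.one_le_iff_ne_zero.mpr hdi)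
            ext k
            by_cases hk : k = i
            · subst hk; simp [h1i]
            · have := hle k
              simp only [Finsupp.single_apply, if_neg (Ne.symm hk)] at this ⊢
              omega
          exact aeval_zero_eq_zero_of_ne _ hne _
      have hdeg : d.degree ≠ 1 := fun h => h1 (degree_one_exists d h)
      rw [hD, map_zero, homogeneousComponent_monomial', if_neg hdeg]

lemma bracket_eval_zero {W : Type*} [AddCommGroup W] [Module ℝ W]
    (σW : W →ₗ[ℝ] W →ₗ[ℝ] ℝ) (bW : Module.Basis κ' ℝ W)
    (PW : MvPolynomial κ' ℝ →ₗ[ℝ] MvPolynomial κ' ℝ →ₗ[ℝ] MvPolynomial κ' ℝ)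
    (hPW : IsCanPoisBracket σW bW PW) (f g : MvPolynomial κ' ℝ) :
    aeval (0 : κ' → ℝ) (PW f g)
      = σW (bW.repr.symm (Dm (0 : κ' → ℝ) f)) (bW.repr.symm (Dm (0 : κ' → ℝ) g)) := by
  obtain ⟨hXX, hanti, -, hleib⟩ := hPW
  set e : MvPolynomial κ' ℝ →ₐ[ℝ] ℝ := aeval (0 : κ' → ℝ) with he
  have eX : ∀ j, e (X j : MvPolynomial κ' ℝ) = 0 := by intro j; simp [he]
  have hB2 : ∀ f g h : MvPolynomial κ' ℝ,
      e (PW f (g * h)) = e g * e (PW f h) + e h * e (PW f g) := by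
    intro f g h
    rw [hleib f g h, map_add, map_mul, map_mul]
    ring
  have hB1 : ∀ f g h : MvPolynomial κ' ℝ,
      e (PW (f * g) h) = e f * e (PW g h) + e g * e (PW f h) := by
    intro f g h
    rw [hanti (f * g) h, map_neg, hB2, hanti h f, hanti h g, map_neg, map_neg]
    ring
  have h1 : ∀ h : MvPolynomial κ' ℝ, e (PW 1 h) = 0 := by
    intro h
    have h2 := hB1 1 1 h
    have e1 : e (1 : MvPolynomial κ' ℝ) = 1 := map_one e
    simp only [one_mul, e1] at h2
    linarith
  have hCl : ∀ (r : ℝ) (h : MvPolynomial κ' ℝ), e (PW (C r) h) = 0 := by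
    intro r h
    have hc : (C r : MvPolynomial κ' ℝ) = r • 1 := by
      rw [smul_eq_C_mul, mul_one]
    rw [hc, map_smul, LinearMap.smul_apply, map_smul, h1, smul_eq_mul, mul_zero]
  have hCr : ∀ (h : MvPolynomial κ' ℝ) (r : ℝ), e (PW h (C r)) = 0 := by
    intro h r
    rw [hanti, map_neg, hCl, neg_zero]
  have hTmul : ∀ f g : MvPolynomial κ' ℝ,
      (bW.repr.symm (Dm (0 : κ' → ℝ) (f * g)) : W)
        = e f • bW.repr.symm (Dm (0 : κ' → ℝ) g) + e g • bW.repr.symm (Dm (0 : κ' → ℝ) f) := by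
    intro f g
    rw [Dm_mul, map_add, map_smul, map_smul]
  have hXcase : ∀ (j : κ') (g : MvPolynomial κ' ℝ),
      e (PW (X j) g) = σW (bW j) (bW.repr.symm (Dm (0 : κ' → ℝ) g)) := by
    intro j g
    induction g using MvPolynomial.induction_on with
    | C r => rw [hCr, Dm_C, map_zero, map_zero]
    | add f g hf hg => simp only [map_add, hf, hg]
    | mul_X g k hg =>
      rw [hB2 (X j) g (X k), eX k, zero_mul, add_zero, hXX j k, hTmul, map_add, map_smul,
        map_smul, eX k, zero_smul, add_zero, Dm_X, Module.Basis.repr_symm_single_one, smul_eq_mul]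
      congr 1
      simp [he]
  have hmain : ∀ f g : MvPolynomial κ' ℝ,
      e (PW f g) = σW (bW.repr.symm (Dm (0 : κ' → ℝ) f)) (bW.repr.symm (Dm (0 : κ' → ℝ) g)) := by
    intro f g
    induction f using MvPolynomial.induction_on with
    | C r => rw [hCl, Dm_C, map_zero, map_zero, LinearMap.zero_apply]
    | add f f' hf hf' => simp only [map_add, LinearMap.add_apply, hf, hf']
    | mul_X f j hf =>
      rw [hB1 f (X j) g, eX j, zero_mul, add_zero, hXcase j g, hTmul f (X j), eX j, zero_smul,
        add_zero, Dm_X, Module.Basis.repr_symm_single_one, map_smul, LinearMap.smul_apply, smul_eq_mul]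
  exact hmain f g

end Stmt2Aux

open Stmt2Aux in
/-- If the canonical Poisson algebras `CanPois(V,σV)` and `CanPois(W,σW)` are
isomorphic as unital Poisson algebras, then `(V,σV)` and `(W,σW)` are isomorphic as
presymplectic vector spaces; moreover `L = π_{S¹(W)} ∘ κ|_{S¹(V)}` is such a presymplectic
isomorphism. -/
theorem stmt2 {V W ι κ' : Type*} [AddCommGroup V] [Module ℝ V] [AddCommGroup W] [Module ℝ W]
    (σV : V →ₗ[ℝ] V →ₗ[ℝ] ℝ) (σW : W →ₗ[ℝ] W →ₗ[ℝ] ℝ)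
    (hσV : ∀ v w, σV v w = - σV w v) (hσW : ∀ v w, σW v w = - σW w v)
    (bV : Module.Basis ι ℝ V) (bW : Module.Basis κ' ℝ W)
    (PV : MvPolynomial ι ℝ →ₗ[ℝ] MvPolynomial ι ℝ →ₗ[ℝ] MvPolynomial ι ℝ)
    (PW : MvPolynomial κ' ℝ →ₗ[ℝ] MvPolynomial κ' ℝ →ₗ[ℝ] MvPolynomial κ' ℝ)
    (hPV : IsCanPoisBracket σV bV PV) (hPW : IsCanPoisBracket σW bW PW)
    -- a unital Poisson algebra isomorphism κ
    (Φ : MvPolynomial ι ℝ ≃ₐ[ℝ] MvPolynomial κ' ℝ)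
    (hΦ : ∀ a c, Φ (PV a c) = PW (Φ a) (Φ c)) :
    ∃ L : V ≃ₗ[ℝ] W,
      (∀ v v', σW (L v) (L v') = σV v v') ∧
      -- `L` is the composite of the restriction of `Φ` to degree one with the projection
      -- onto the degree-one component (identifying `V`, `W` with the degree-one parts via
      -- the linear inclusions determined by the bases)
      (∀ v, (bW.constr ℝ fun j => (X j : MvPolynomial κ' ℝ)) (L v)
          = homogeneousComponent 1 (Φ ((bV.constr ℝ fun i => (X i : MvPolynomial ι ℝ)) v))) := by
  classical
  set ιV : V →ₗ[ℝ] MvPolynomial ι ℝ := bV.constr ℝ fun i => X i with hiV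
  set ιW : W →ₗ[ℝ] MvPolynomial κ' ℝ := bW.constr ℝ fun j => X j with hiW
  set a : ι → ℝ := fun i => aeval (0 : κ' → ℝ) (Φ (X i)) with ha
  -- the two candidate inverse linear maps
  set Lmap : V →ₗ[ℝ] W :=
    (bW.repr.symm : (κ' →₀ ℝ) ≃ₗ[ℝ] W).toLinearMap ∘ₗ Dm (0 : κ' → ℝ) ∘ₗ Φ.toLinearMap ∘ₗ ιV
    with hLmap
  set Nmap : W →ₗ[ℝ] V :=
    (bV.repr.symm : (ι →₀ ℝ) ≃ₗ[ℝ] V).toLinearMap ∘ₗ Dm a ∘ₗ Φ.symm.toLinearMap ∘ₗ ιW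
    with hNmap
  have hLapp : ∀ v, Lmap v = bW.repr.symm (Dm (0 : κ' → ℝ) (Φ (ιV v))) := fun v => rfl
  have hNapp : ∀ w, Nmap w = bV.repr.symm (Dm a (Φ.symm (ιW w))) := fun w => rfl
  -- evaluation at `a` on the source equals evaluation at `0` after applying `Φ`
  have haΦ : ∀ f : MvPolynomial ι ℝ, aeval a f = aeval (0 : κ' → ℝ) (Φ f) := by
    intro f
    have h : (aeval (R := ℝ) a)
        = ((aeval (0 : κ' → ℝ) : MvPolynomial κ' ℝ →ₐ[ℝ] ℝ)).comp Φ.toAlgHom := by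
      apply MvPolynomial.algHom_ext
      intro i
      simp [ha]
    exact DFunLike.congr_fun h f
  -- the two chain rules
  have hchain1 : ∀ f : MvPolynomial κ' ℝ,
      Dm a (Φ.symm f) = Finsupp.linearCombination ℝ
        (fun j => Dm a (Φ.symm (X j))) (Dm (0 : κ' → ℝ) f) := by
    intro f
    refine Dm_chain Φ.symm.toAlgHom a 0 (fun j => ?_) f
    show aeval a (Φ.symm (X j)) = 0
    rw [haΦ, AlgEquiv.apply_symm_apply]
    simp
  have hchain2 : ∀ g : MvPolynomial ι ℝ,
      Dm (0 : κ' → ℝ) (Φ g) = Finsupp.linearCombination ℝ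
        (fun i => Dm (0 : κ' → ℝ) (Φ (X i))) (Dm a g) := by
    intro g
    exact Dm_chain Φ.toAlgHom 0 a (fun i => rfl) g
  -- unpacking `repr.symm` through the inclusions
  have hstepW : ∀ c : κ' →₀ ℝ, ιW (bW.repr.symm c)
      = Finsupp.linearCombination ℝ (fun j => (X j : MvPolynomial κ' ℝ)) c := by
    intro c
    rw [hiW, Module.Basis.constr_apply, LinearEquiv.apply_symm_apply, Finsupp.linearCombination_apply]
  have hstepV : ∀ c : ι →₀ ℝ, ιV (bV.repr.symm c)
      = Finsupp.linearCombination ℝ (fun i => (X i : MvPolynomial ι ℝ)) c := by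
    intro c
    rw [hiV, Module.Basis.constr_apply, LinearEquiv.apply_symm_apply, Finsupp.linearCombination_apply]
  -- N ∘ L = id
  have hNL : ∀ v, Nmap (Lmap v) = v := by
    intro v
    rw [hNapp, hLapp, hstepW]
    have h1 : Φ.symm (Finsupp.linearCombination ℝ (fun j => (X j : MvPolynomial κ' ℝ))
        (Dm (0 : κ' → ℝ) (Φ (ιV v))))
        = Finsupp.linearCombination ℝ (fun j => Φ.symm (X j)) (Dm (0 : κ' → ℝ) (Φ (ιV v))) := by
      have := Finsupp.apply_linearCombination (R := ℝ) Φ.symm.toLinearMap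
        (fun j => (X j : MvPolynomial κ' ℝ)) (Dm (0 : κ' → ℝ) (Φ (ιV v)))
      simpa [Function.comp_def] using this
    rw [h1]
    have h2 : Dm a (Finsupp.linearCombination ℝ (fun j => Φ.symm (X j))
        (Dm (0 : κ' → ℝ) (Φ (ιV v))))
        = Finsupp.linearCombination ℝ (fun j => Dm a (Φ.symm (X j)))
          (Dm (0 : κ' → ℝ) (Φ (ιV v))) := by
      have := Finsupp.apply_linearCombination (R := ℝ) (Dm a)
        (fun j => Φ.symm (X j)) (Dm (0 : κ' → ℝ) (Φ (ιV v)))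
      simpa [Function.comp_def] using this
    rw [h2, ← hchain1, AlgEquiv.symm_apply_apply, hiV, Dm_constr, LinearEquiv.symm_apply_apply]
  -- L ∘ N = id
  have hLN : ∀ w, Lmap (Nmap w) = w := by
    intro w
    rw [hLapp, hNapp, hstepV]
    have h1 : Φ (Finsupp.linearCombination ℝ (fun i => (X i : MvPolynomial ι ℝ))
        (Dm a (Φ.symm (ιW w))))
        = Finsupp.linearCombination ℝ (fun i => Φ (X i)) (Dm a (Φ.symm (ιW w))) := by
      have := Finsupp.apply_linearCombination (R := ℝ) Φ.toLinearMap
        (fun i => (X i : MvPolynomial ι ℝ)) (Dm a (Φ.symm (ιW w)))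
      simpa [Function.comp_def] using this
    rw [h1]
    have h2 : Dm (0 : κ' → ℝ) (Finsupp.linearCombination ℝ (fun i => Φ (X i))
        (Dm a (Φ.symm (ιW w))))
        = Finsupp.linearCombination ℝ (fun i => Dm (0 : κ' → ℝ) (Φ (X i)))
          (Dm a (Φ.symm (ιW w))) := by
      have := Finsupp.apply_linearCombination (R := ℝ) (Dm (0 : κ' → ℝ))
        (fun i => Φ (X i)) (Dm a (Φ.symm (ιW w)))
      simpa [Function.comp_def] using this
    rw [h2, ← hchain2, AlgEquiv.apply_symm_apply, hiW, Dm_constr, LinearEquiv.symm_apply_apply]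
  -- assemble the equivalence
  refine ⟨LinearEquiv.ofLinear Lmap Nmap (LinearMap.ext hLN) (LinearMap.ext hNL), ?_, ?_⟩
  · -- the presymplectic form is preserved
    intro v v'
    rw [LinearEquiv.ofLinear_apply, LinearEquiv.ofLinear_apply, hLapp, hLapp,
      ← bracket_eval_zero σW bW PW hPW (Φ (ιV v)) (Φ (ιV v')), ← hΦ]
    have hPVc : PV (ιV v) (ιV v') = C (σV v v') := by
      have h : PV.compl₁₂ ιV ιV = σV.compr₂ (Algebra.linearMap ℝ (MvPolynomial ι ℝ)) := by
        refine bV.ext fun i => bV.ext fun j => ?_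
        simp only [LinearMap.compl₁₂_apply, LinearMap.compr₂_apply, hiV, Module.Basis.constr_basis,
          Algebra.linearMap_apply, MvPolynomial.algebraMap_eq]
        exact hPV.1 i j
      have h2 := DFunLike.congr_fun (DFunLike.congr_fun h v) v'
      simpa [LinearMap.compl₁₂_apply, LinearMap.compr₂_apply, Algebra.linearMap_apply,
        MvPolynomial.algebraMap_eq] using h2
    rw [hPVc]
    have : Φ (C (σV v v')) = C (σV v v') := by
      rw [← MvPolynomial.algebraMap_eq, AlgEquiv.commutes, MvPolynomial.algebraMap_eq]
    rw [this]
    simp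
  · -- the degree-one component condition
    intro v
    rw [LinearEquiv.ofLinear_apply, hLapp, hstepW, lc_Dm_eq_hc1]
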